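/- Let C be a finite multiset of instance values such that every positive element has a strictly greater prediction value than every negative element (i.e., for all (y, ŷ), (y', ŷ') in C, y < y' implies ŷ < ŷ' and y > y' implies ŷ > ŷ'). Then for every sub-multiset C' ⊆ C with P(C') ≥ 1 and N(C') ≥ 1, ROCAUC(C') = 1. -/

import Mathlib

/-- An instance value: a label (`true` = positive, i.e. `y = 1`;
`false` = negative, i.e. `y = 0`) together with a real prediction score. -/
abbrev Inst : Type := Bool × ℝ

/-- `P C`: the number of positive elements of `C`. -/
def P (C : Multiset Inst) : ℕ := (C.filter (fun c => c.1 = true)).card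

/-- `N C`: the number of negative elements of `C`. -/
def N (C : Multiset Inst) : ℕ := (C.filter (fun c => c.1 = false)).card

/-- `TP C t`: the number of positives of `C` with prediction strictly above `t`. -/
noncomputable def TP (C : Multiset Inst) (t : ℝ) : ℕ :=
  (C.filter (fun c => c.1 = true ∧ t < c.2)).card

/-- `FP C t`: the number of negatives of `C` with prediction strictly above `t`. -/
noncomputable def FP (C : Multiset Inst) (t : ℝ) : ℕ :=
  (C.filter (fun c => c.1 = false ∧ t < c.2)).card

/-- The ROC/PR supporting points `(TP, FP)` of `C`, listed in order of
decreasing threshold, for `t` ranging over the prediction values occurring in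
`C` together with `t = -∞` (the latter yielding the final point `(P C, N C)`). -/
noncomputable def supportingPoints (C : Multiset Inst) : List (ℝ × ℝ) :=
  (((C.map Prod.snd).toFinset.sort (· ≤ ·)).reverse.map
    (fun t => ((TP C t : ℝ), (FP C t : ℝ)))) ++ [((P C : ℝ), (N C : ℝ))]

/-- The trapezoidal sum `Σ_{i=2}^{k} |FP_i − FP_{i−1}| · (TP_i + TP_{i−1})/2`
over a list of `(TP, FP)` points. -/
noncomputable def trapROC : List (ℝ × ℝ) → ℝ
  | [] => 0
  | [_] => 0
  | a :: b :: l => |b.2 - a.2| * (b.1 + a.1) / 2 + trapROC (b :: l)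

/-- The area under the ROC curve of `C` (defined whenever `P C ≥ 1` and `N C ≥ 1`). -/
noncomputable def ROCAUC (C : Multiset Inst) : ℝ :=
  trapROC (supportingPoints C) / ((P C : ℝ) * (N C : ℝ))

/-- The trapezoidal sum `Σ_{i=2}^{k} |TP_i − TP_{i−1}| ·
(TP_i/(TP_i+FP_i) + TP_{i−1}/(TP_{i−1}+FP_{i−1}))/2` over a list of `(TP, FP)`
points; in `ℝ`, division by zero yields `0`, realizing the convention `0/0 = 0`. -/
noncomputable def trapPR : List (ℝ × ℝ) → ℝ
  | [] => 0
  | [_] => 0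
  | a :: b :: l =>
      |b.1 - a.1| * (b.1 / (b.1 + b.2) + a.1 / (a.1 + a.2)) / 2 + trapPR (b :: l)

/-- The (linearly interpolated) area under the PR curve of `C`
(defined whenever `P C ≥ 1`). -/
noncomputable def PRAUC (C : Multiset Inst) : ℝ :=
  trapPR (supportingPoints C) / (P C : ℝ)

private lemma sorted_chain' (l : List ℝ) (h : l.Pairwise (· < ·)) :
    l.Chain' (fun a b => a ∈ l ∧ b ∈ l ∧ a < b ∧ ∀ s ∈ l, a < s → b ≤ s) := by
  unfold List.Chain'
  rw [List.isChain_iff_getElem]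
  intro i hi
  have hsm : StrictMono l.get := h.sortedLT.strictMono_get
  have hi1 : i < l.length := by omega
  have hi2 : i + 1 < l.length := by omega
  refine ⟨List.get_mem l ⟨i, hi1⟩, List.get_mem l ⟨i+1, hi2⟩, hsm (by simp), ?_⟩
  intro s hs has
  obtain ⟨j, hj⟩ := List.mem_iff_get.1 hs
  subst hj
  have hij : (⟨i, hi1⟩ : Fin l.length) < j := hsm.lt_iff_lt.1 has
  have : (⟨i+1, hi2⟩ : Fin l.length) ≤ j := by
    rcases j with ⟨j, hjl⟩
    simp only [Fin.mk_lt_mk] at hij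
    exact Fin.mk_le_mk.2 (by omega)
  exact hsm.monotone this

private lemma sorted_mem_le_getLast {l : List ℝ} (h : l.Pairwise (· ≤ ·)) (hne : l ≠ []) :
    ∀ s ∈ l, s ≤ l.getLast hne := by
  intro s hs
  obtain ⟨j, rfl⟩ := List.mem_iff_get.1 hs
  rw [List.getLast_eq_getElem]
  refine h.rel_get_of_le ?_
  have := j.2
  exact Fin.mk_le_mk.2 (by omega)

private lemma sorted_head_le_mem {l : List ℝ} (h : l.Pairwise (· ≤ ·)) (hne : l ≠ []) :
    ∀ s ∈ l, l.head hne ≤ s := by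
  intro s hs
  obtain ⟨j, rfl⟩ := List.mem_iff_get.1 hs
  have h0 : 0 < l.length := List.length_pos_iff.2 hne
  have : l.head hne = l.get ⟨0, h0⟩ := by
    rw [List.head_eq_getElem]; rfl
  rw [this]
  exact h.rel_get_of_le (Fin.mk_le_mk.2 (by omega))

private lemma trap_chain (p : ℝ) :
    ∀ (l : List (ℝ × ℝ)) (a : ℝ × ℝ),
      (a :: l).Chain' (fun x y => x.2 ≤ y.2 ∧ (x.2 < y.2 → x.1 = p ∧ y.1 = p)) →
      trapROC (a :: l) = p * (((a :: l).getLast (by simp)).2 - a.2)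
  | [], a, _ => by simp [trapROC]
  | b :: l, a, h => by
    unfold List.Chain' at h
    rw [List.isChain_cons_cons] at h
    obtain ⟨⟨hle, himp⟩, hch⟩ := h
    have ih := trap_chain p l b hch
    have hlast : ((a :: b :: l).getLast (by simp)) = ((b :: l).getLast (by simp)) := by
      simp [List.getLast_cons]
    rw [show trapROC (a :: b :: l) = |b.2 - a.2| * (b.1 + a.1) / 2 + trapROC (b :: l) from rfl,
      ih, hlast]
    rcases eq_or_lt_of_le hle with heq | hlt
    · rw [heq]; simp
    · obtain ⟨h1, h2⟩ := himp hlt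
      rw [abs_of_pos (by linarith), h1, h2]; ring

/-- If every positive element of `C` has a strictly greater
prediction value than every negative element (for all `(y, ŷ), (y', ŷ')` in
`C`, `y < y'` implies `ŷ < ŷ'` and `y > y'` implies `ŷ > ŷ'`), then every
sub-multiset `C' ⊆ C` with `P C' ≥ 1` and `N C' ≥ 1` has `ROCAUC C' = 1`. -/
theorem rocauc_eq_one_of_perfect (C : Multiset Inst)
    (hperf : ∀ c ∈ C, ∀ c' ∈ C,
      (c.1 < c'.1 → c.2 < c'.2) ∧ (c'.1 < c.1 → c'.2 < c.2)) :
    ∀ C' ≤ C, 1 ≤ P C' → 1 ≤ N C' → ROCAUC C' = 1 := by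
  intro D hD hP hN
  have hsep : ∀ c ∈ D, c.1 = false → ∀ c' ∈ D, c'.1 = true → c.2 < c'.2 := by
    intro c hc hcf c' hc' hct
    have := (hperf c (Multiset.mem_of_le hD hc) c' (Multiset.mem_of_le hD hc')).1
    apply this; rw [hcf, hct]; exact Bool.false_lt_true
  set f : ℝ → ℝ × ℝ := fun t => ((TP D t : ℝ), (FP D t : ℝ)) with hf
  set ts := ((D.map Prod.snd).toFinset.sort (· ≤ ·)) with hts
  have hmem : ∀ s : ℝ, s ∈ ts ↔ ∃ c ∈ D, c.2 = s := by
    intro s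
    rw [hts, Finset.mem_sort, Multiset.mem_toFinset, Multiset.mem_map]
  -- TP D t = P D whenever some element of D has label false and value ≥ t... use: all positives above t
  have hTPfull : ∀ t : ℝ, (∀ c ∈ D, c.1 = true → t < c.2) → TP D t = P D := by
    intro t ht
    unfold TP P
    congr 1
    apply Multiset.filter_congr
    intro c hc
    exact ⟨fun h => h.1, fun h1 => ⟨h1, ht c hc h1⟩⟩
  -- monotonicity of FP
  have hFPmono : ∀ t t' : ℝ, t' ≤ t → FP D t ≤ FP D t' := by
    intro t t' h
    exact Multiset.card_le_card (Multiset.monotone_filter_right _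
      (fun c hc => ⟨hc.1, lt_of_le_of_lt h hc.2⟩))
  have hFPle : ∀ t : ℝ, FP D t ≤ N D := by
    intro t
    exact Multiset.card_le_card (Multiset.monotone_filter_right _ (fun c hc => hc.1))
  have hTPle : ∀ t : ℝ, TP D t ≤ P D := by
    intro t
    exact Multiset.card_le_card (Multiset.monotone_filter_right _ (fun c hc => hc.1))
  -- if FP increases going down, a negative lies in between
  have hFPlt : ∀ t t' : ℝ, FP D t < FP D t' →
      ∃ c ∈ D, c.1 = false ∧ t' < c.2 ∧ c.2 ≤ t := by
    intro t t' h
    by_contra hcon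
    push_neg at hcon
    have : FP D t' ≤ FP D t := by
      apply Multiset.card_le_card
      rw [Multiset.le_filter]
      refine ⟨Multiset.filter_le _ _, ?_⟩
      intro c hc
      rw [Multiset.mem_filter] at hc
      obtain ⟨hcD, hc1, hc2⟩ := hc
      exact ⟨hc1, hcon c hcD hc1 hc2⟩
    omega
  -- ts is nonempty
  have hDne : D ≠ 0 := by
    intro h
    rw [h] at hP
    simp [P] at hP
  have htsne : ts ≠ [] := by
    intro h
    obtain ⟨c, hc⟩ := Multiset.exists_mem_of_ne_zero hDne
    have : c.2 ∈ ts := (hmem c.2).2 ⟨c, hc, rfl⟩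
    rw [h] at this
    exact List.not_mem_nil this
  set tmax := ts.getLast htsne with htmax
  set tmin := ts.head htsne with htmin
  have hsorted : ts.Pairwise (· ≤ ·) := Finset.pairwise_sort _ _
  have hmaxle : ∀ s ∈ ts, s ≤ tmax := sorted_mem_le_getLast hsorted htsne
  have hminle : ∀ s ∈ ts, tmin ≤ s := sorted_head_le_mem hsorted htsne
  -- the chain on thresholds
  have hchain : ts.Chain' (fun a b => a ∈ ts ∧ b ∈ ts ∧ a < b ∧ ∀ s ∈ ts, a < s → b ≤ s) :=
    sorted_chain' ts (Finset.sortedLT_sort _).pairwise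
  set R : ℝ × ℝ → ℝ × ℝ → Prop :=
    fun x y => x.2 ≤ y.2 ∧ (x.2 < y.2 → x.1 = (P D : ℝ) ∧ y.1 = (P D : ℝ)) with hR
  -- key step: R (f t) (f t') for properly adjacent thresholds t' < t
  have hkey : ∀ t' t : ℝ, t' ∈ ts → t ∈ ts → t' < t → (∀ s ∈ ts, t' < s → t ≤ s) →
      R (f t) (f t') := by
    intro t' t ht's hts' hlt hadj
    simp only [hR, hf]
    constructor
    · exact_mod_cast hFPmono t t' hlt.le
    · intro hflt
      have hflt' : FP D t < FP D t' := by exact_mod_cast hflt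
      obtain ⟨c, hcD, hc1, hc2, hc3⟩ := hFPlt t t' hflt'
      have hcts : c.2 ∈ ts := (hmem c.2).2 ⟨c, hcD, rfl⟩
      have : t ≤ c.2 := hadj c.2 hcts hc2
      have hceq : c.2 = t := le_antisymm hc3 this
      have hTPt : TP D t = P D := by
        apply hTPfull
        intro c' hc' hct'
        rw [← hceq]
        exact hsep c hcD hc1 c' hc' hct'
      have hTPt' : TP D t' = P D := by
        apply hTPfull
        intro c' hc' hct'
        have := hsep c hcD hc1 c' hc' hct'
        rw [hceq] at this
        linarith
      exact ⟨by rw [hTPt], by rw [hTPt']⟩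
  -- chain on the mapped reversed list
  have hchainM : (ts.reverse.map f).Chain' R := by
    unfold List.Chain'
    rw [List.isChain_map, List.isChain_reverse]
    apply List.IsChain.imp ?_ hchain
    intro a b hab
    exact hkey a b hab.1 hab.2.1 hab.2.2.1 hab.2.2.2
  -- endpoint values
  have hFPmax : FP D tmax = 0 := by
    rw [FP, Multiset.card_eq_zero, Multiset.filter_eq_nil]
    intro c hc ⟨hc1, hc2⟩
    have : c.2 ∈ ts := (hmem c.2).2 ⟨c, hc, rfl⟩
    exact absurd (hmaxle c.2 this) (not_le.2 hc2)
  have hlastR : R (f tmin) ((P D : ℝ), (N D : ℝ)) := by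
    simp only [hR, hf]
    constructor
    · exact_mod_cast hFPle tmin
    · intro hlt
      have hlt' : FP D tmin < N D := by exact_mod_cast hlt
      have : ∃ c ∈ D, c.1 = false ∧ c.2 ≤ tmin := by
        by_contra hcon
        push_neg at hcon
        have : N D ≤ FP D tmin := by
          apply Multiset.card_le_card
          rw [Multiset.le_filter]
          refine ⟨Multiset.filter_le _ _, ?_⟩
          intro c hc
          rw [Multiset.mem_filter] at hc
          exact ⟨hc.2, hcon c hc.1 hc.2⟩
        omega
      obtain ⟨c, hcD, hc1, hc2⟩ := this
      have hcts : c.2 ∈ ts := (hmem c.2).2 ⟨c, hcD, rfl⟩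
      have hceq : c.2 = tmin := le_antisymm hc2 (hminle c.2 hcts)
      have hTPmin : TP D tmin = P D := by
        apply hTPfull
        intro c' hc' hct'
        rw [← hceq]
        exact hsep c hcD hc1 c' hc' hct'
      exact ⟨by rw [hTPmin], by simp⟩
  -- full chain
  have hchainL : (supportingPoints D).Chain' R := by
    rw [show supportingPoints D = (ts.reverse.map f) ++ [((P D : ℝ), (N D : ℝ))] from rfl]
    apply List.IsChain.append hchainM (List.isChain_singleton _)
    intro x hx y hy
    simp only [List.head?_cons, Option.mem_some_iff] at hy
    rw [List.getLast?_map, List.getLast?_reverse, List.head?_eq_head htsne,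
      Option.map_some] at hx
    simp only [Option.mem_some_iff] at hx
    rw [← hx, ← hy]
    exact hlastR
  -- decompose supportingPoints D as cons
  have hrne : ts.reverse ≠ [] := by simpa using htsne
  obtain ⟨b, r, hbr⟩ := List.exists_cons_of_ne_nil hrne
  have hb : b = tmax := by
    have h1 : ts.reverse.head? = some b := by rw [hbr]; rfl
    have h2 : ts.reverse.head? = some tmax := by
      rw [List.head?_reverse, List.getLast?_eq_getLast htsne]
    rw [h1] at h2
    exact (Option.some.injEq _ _ ▸ h2).symm ▸ rfl
  have hsp : supportingPoints D = f b :: (r.map f ++ [((P D : ℝ), (N D : ℝ))]) := by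
    rw [show supportingPoints D = (ts.reverse.map f) ++ [((P D : ℝ), (N D : ℝ))] from rfl, hbr]
    simp
  have hne2 : (f b :: (r.map f ++ [((P D : ℝ), (N D : ℝ))])) ≠ [] := by simp
  have htrap := trap_chain (P D : ℝ) (r.map f ++ [((P D : ℝ), (N D : ℝ))]) (f b)
    (by rw [← hsp]; exact hchainL)
  have hlast2 : ((f b :: (r.map f ++ [((P D : ℝ), (N D : ℝ))])).getLast (by simp))
      = ((P D : ℝ), (N D : ℝ)) := by
    have h1 : (f b :: (r.map f ++ [((P D : ℝ), (N D : ℝ))])).getLast? =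
        some ((P D : ℝ), (N D : ℝ)) := by
      rw [show f b :: (r.map f ++ [((P D : ℝ), (N D : ℝ))])
          = (f b :: r.map f) ++ [((P D : ℝ), (N D : ℝ))] by simp,
        List.getLast?_concat]
    rw [List.getLast?_eq_getLast hne2] at h1
    exact Option.some_injective _ h1
  rw [ROCAUC, hsp, htrap, hlast2]
  have hfb2 : (f b).2 = 0 := by
    simp only [hf]
    rw [hb, hFPmax]
    simp
  rw [hfb2]
  have hP0 : (0 : ℝ) < (P D : ℝ) := by exact_mod_cast hP
  have hN0 : (0 : ℝ) < (N D : ℝ) := by exact_mod_cast hN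
  field_simp
  simp
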